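/- Let e, k satisfy 2k ≤ e and e - k ≥ 4, and let R = k[X_i : i ∈ [0,e-1] \ [k,2k-1]] with the grading deg X_i = e + i, where we interpret X_{e+2t} = X_t² and X_{e+2t+1} = X_t X_{t+1}. Then the defining ideal I_k of the semigroup ring k[S_k], S_k = ⟨e,...,e+k-1, e+2k,...,2e-1⟩, equals I₂(A) + I₂(B), where A is the 2×(e-k-1) matrix with rows (X_0,...,X_{k-2}, X_{2k},...,X_{e-1}) and (X_1,...,X_{k-1}, X_{2k+1},...,X_0²), and B is the 2×(e-k-2) matrix with rows (X_{k-1}, X_{2k},...,X_{e+k-3}) and (X_{2k}, X_{3k+1},...,X_{k-1}²). -/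

import Mathlib

open MvPolynomial

noncomputable section

/-- The index set of variables: `[0, e-1] \ [k, 2k-1]`. -/
def SallyVar (e k : ℕ) : Type := {i : ℕ // i < e ∧ (i < k ∨ 2 * k ≤ i)}

/-- The variable `X i` for `i` in the index set, and `0` otherwise. -/
def Xv (K : Type) [Field K] (e k : ℕ) (i : ℕ) : MvPolynomial (SallyVar e k) K :=
  if h : i < e ∧ (i < k ∨ 2 * k ≤ i) then X (⟨i, h⟩ : SallyVar e k) else 0

/-- The extended symbols: `Xb i = X i` for `i < e`, while for `i ≥ e` we interpret
`X_{e+2t} = X_t ^ 2` and `X_{e+2t+1} = X_t * X_{t+1}`. -/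
def Xb (K : Type) [Field K] (e k : ℕ) (i : ℕ) : MvPolynomial (SallyVar e k) K :=
  if i < e then Xv K e k i
  else if (i - e) % 2 = 0 then (Xv K e k ((i - e) / 2)) ^ 2
  else Xv K e k ((i - e) / 2) * Xv K e k ((i - e) / 2 + 1)

/-- The defining ideal `I_k` of the semigroup ring `K[S_k]`,
`S_k = ⟨e,…,e+k-1, e+2k,…,2e-1⟩`: the kernel of `X i ↦ T ^ (e + i)`. -/
def sallyIdeal (K : Type) [Field K] (e k : ℕ) : Ideal (MvPolynomial (SallyVar e k) K) :=
  RingHom.ker (aeval fun v : SallyVar e k =>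
    (Polynomial.X : Polynomial K) ^ (e + v.1)).toRingHom

/-- The column indices of the matrix `A^e_k`: `{0,…,k-2} ∪ {2k,…,e-1}`; the column
at index `c` is `(Xb c, Xb (c+1))`, so the rows of `A^e_k` are
`(X_0,…,X_{k-2},X_{2k},…,X_{e-1})` and `(X_1,…,X_{k-1},X_{2k+1},…,X_0²)`. -/
def colsA (e k : ℕ) : Set ℕ := {c | c < e ∧ (c + 1 < k ∨ 2 * k ≤ c)}

/-- The `2 × 2` minors of `A^e_k`. -/
def minorsA (K : Type) [Field K] (e k : ℕ) : Set (MvPolynomial (SallyVar e k) K) :=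
  {p | ∃ c₁ ∈ colsA e k, ∃ c₂ ∈ colsA e k,
    p = Xb K e k c₁ * Xb K e k (c₂ + 1) - Xb K e k c₂ * Xb K e k (c₁ + 1)}

/-- The columns of the matrix `B^e_k`, as pairs (top entry, bottom entry): the first
column is `(X_{k-1}, X_{2k})` and for `2k ≤ c ≤ e+k-3` there is a column
`(X_c, X_{c+k+1})`; so the rows of `B^e_k` are `(X_{k-1}, X_{2k},…,X_{e+k-3})` and
`(X_{2k}, X_{3k+1},…,X_{k-1}²)`. -/
def colsB (K : Type) [Field K] (e k : ℕ) :
    Set (MvPolynomial (SallyVar e k) K × MvPolynomial (SallyVar e k) K) :=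
  insert (Xb K e k (k - 1), Xb K e k (2 * k))
    {p | ∃ c, 2 * k ≤ c ∧ c ≤ e + k - 3 ∧ p = (Xb K e k c, Xb K e k (c + k + 1))}

/-- The `2 × 2` minors of `B^e_k`. -/
def minorsB (K : Type) [Field K] (e k : ℕ) : Set (MvPolynomial (SallyVar e k) K) :=
  {p | ∃ q₁ ∈ colsB K e k, ∃ q₂ ∈ colsB K e k, p = q₁.1 * q₂.2 - q₂.1 * q₁.2}

namespace Sally

variable {K : Type} [Field K] {e k : ℕ}

/-- The ideal generated by all the minors. -/
def J (K : Type) [Field K] (e k : ℕ) : Ideal (MvPolynomial (SallyVar e k) K) :=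
  Ideal.span (minorsA K e k) ⊔ Ideal.span (minorsB K e k)

def Cong (p q : MvPolynomial (SallyVar e k) K) : Prop := p - q ∈ J K e k

lemma Cong.refl (p : MvPolynomial (SallyVar e k) K) : Cong p p := by
  simp [Cong, Ideal.zero_mem]

lemma Cong.symm {p q : MvPolynomial (SallyVar e k) K} (h : Cong p q) : Cong q p := by
  have := (J K e k).neg_mem h
  simpa [Cong, neg_sub] using this

lemma Cong.trans {p q r : MvPolynomial (SallyVar e k) K} (h1 : Cong p q) (h2 : Cong q r) :
    Cong p r := by
  have := (J K e k).add_mem h1 h2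
  simpa [Cong] using this

lemma Cong.mul_left (r : MvPolynomial (SallyVar e k) K) {p q : MvPolynomial (SallyVar e k) K}
    (h : Cong p q) : Cong (r * p) (r * q) := by
  have := (J K e k).mul_mem_left r h
  simpa [Cong, mul_sub] using this

lemma Cong.mul_right (r : MvPolynomial (SallyVar e k) K) {p q : MvPolynomial (SallyVar e k) K}
    (h : Cong p q) : Cong (p * r) (q * r) := by
  have := (J K e k).mul_mem_right r h
  simpa [Cong, sub_mul] using this

/-- Product of variables indexed by a multiset of natural indices. -/
def P (K : Type) [Field K] (e k : ℕ) (m : Multiset ℕ) : MvPolynomial (SallyVar e k) K :=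
  (m.map (Xv K e k)).prod

@[simp] lemma P_zero : P K e k 0 = 1 := rfl

@[simp] lemma P_cons (i : ℕ) (m : Multiset ℕ) :
    P K e k (i ::ₘ m) = Xv K e k i * P K e k m := by
  simp [P]

@[simp] lemma P_add (m n : Multiset ℕ) : P K e k (m + n) = P K e k m * P K e k n := by
  simp [P]

@[simp] lemma P_single (i : ℕ) : P K e k {i} = Xv K e k i := by
  simp [P]

/-- Balanced pair of sum `u`. -/
def bal (u : ℕ) : Multiset ℕ := {u / 2, u - u / 2}

lemma bal_card (u : ℕ) : Multiset.card (bal u) = 2 := rfl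

lemma bal_sum (u : ℕ) : (bal u).sum = u := by
  simp [bal]; omega

lemma bal_mem_le {u i : ℕ} (h : i ∈ bal u) : i ≤ (u + 1) / 2 := by
  simp [bal] at h
  rcases h with h | h <;> omega

lemma Xb_lt {i : ℕ} (h : i < e) : Xb K e k i = Xv K e k i := by
  simp [Xb, h]

lemma Xb_ge {i : ℕ} (h : e ≤ i) : Xb K e k i = P K e k (bal (i - e)) := by
  have h' : ¬ i < e := by omega
  rcases Nat.even_or_odd (i - e) with he | ho
  · have : (i - e) % 2 = 0 := Nat.even_iff.mp he
    have h2 : (i - e) - (i - e) / 2 = (i - e) / 2 := by omega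
    simp [Xb, h', this, bal, h2, sq]
  · have h1 : (i - e) % 2 = 1 := Nat.odd_iff.mp ho
    have h2 : (i - e) - (i - e) / 2 = (i - e) / 2 + 1 := by omega
    simp [Xb, h', h1, bal, h2]

/-- The generating relations, A type. -/
lemma congA {a b : ℕ} (ha : a ∈ colsA e k) (hb : b ∈ colsA e k) :
    Cong (Xb K e k a * Xb K e k (b + 1)) (Xb K e k b * Xb K e k (a + 1)) := by
  have : Xb K e k a * Xb K e k (b + 1) - Xb K e k b * Xb K e k (a + 1) ∈ minorsA K e k :=
    ⟨a, ha, b, hb, rfl⟩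
  exact Ideal.mem_sup_left (Ideal.subset_span this)

/-- The generating relations, B type, first column against column c. -/
lemma congB0 {c : ℕ} (h1 : 2 * k ≤ c) (h2 : c ≤ e + k - 3) :
    Cong (Xb K e k (k - 1) * Xb K e k (c + k + 1)) (Xb K e k c * Xb K e k (2 * k)) := by
  have hq : (Xb K e k (k-1), Xb K e k (2*k)) ∈ colsB K e k := Set.mem_insert _ _
  have hq2 : (Xb K e k c, Xb K e k (c + k + 1)) ∈ colsB K e k :=
    Set.mem_insert_of_mem _ ⟨c, h1, h2, rfl⟩
  have : Xb K e k (k-1) * Xb K e k (c+k+1) - Xb K e k c * Xb K e k (2*k) ∈ minorsB K e k :=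
    ⟨_, hq, _, hq2, rfl⟩
  exact Ideal.mem_sup_right (Ideal.subset_span this)

/-- The generating relations, B type, column c against column c'. -/
lemma congBcc {c c' : ℕ} (h1 : 2 * k ≤ c) (h2 : c ≤ e + k - 3)
    (h1' : 2 * k ≤ c') (h2' : c' ≤ e + k - 3) :
    Cong (Xb K e k c * Xb K e k (c' + k + 1)) (Xb K e k c' * Xb K e k (c + k + 1)) := by
  have hq : (Xb K e k c, Xb K e k (c + k + 1)) ∈ colsB K e k :=
    Set.mem_insert_of_mem _ ⟨c, h1, h2, rfl⟩
  have hq2 : (Xb K e k c', Xb K e k (c' + k + 1)) ∈ colsB K e k :=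
    Set.mem_insert_of_mem _ ⟨c', h1', h2', rfl⟩
  have : Xb K e k c * Xb K e k (c'+k+1) - Xb K e k c' * Xb K e k (c+k+1) ∈ minorsB K e k :=
    ⟨_, hq, _, hq2, rfl⟩
  exact Ideal.mem_sup_right (Ideal.subset_span this)

end Sally

namespace Sally

variable {K : Type} [Field K] {e k : ℕ}

lemma Cong.cast {p q p' q' : MvPolynomial (SallyVar e k) K}
    (h : Cong p q) (hp : p = p') (hq : q = q') : Cong p' q' := hp ▸ hq ▸ h

/-- weight of a multiset of indices -/
def wt (e : ℕ) (m : Multiset ℕ) : ℕ := e * Multiset.card m + m.sum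

@[simp] lemma wt_zero : wt e 0 = 0 := by simp [wt]

@[simp] lemma wt_cons (i : ℕ) (m : Multiset ℕ) : wt e (i ::ₘ m) = (e + i) + wt e m := by
  simp [wt]; ring

@[simp] lemma wt_add (m n : Multiset ℕ) : wt e (m + n) = wt e m + wt e n := by
  simp [wt]; ring

@[simp] lemma wt_single (i : ℕ) : wt e {i} = e + i := by simp [wt]

def Vld (e k : ℕ) (m : Multiset ℕ) : Prop := ∀ i ∈ m, i < e ∧ (i < k ∨ 2 * k ≤ i)

lemma Vld.cons {i : ℕ} {m : Multiset ℕ} (hi : i < e ∧ (i < k ∨ 2 * k ≤ i))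
    (h : Vld e k m) : Vld e k (i ::ₘ m) := by
  intro j hj; rcases Multiset.mem_cons.1 hj with rfl | hj; exact hi; exact h j hj

lemma Vld.add {m n : Multiset ℕ} (h1 : Vld e k m) (h2 : Vld e k n) : Vld e k (m + n) := by
  intro j hj; rcases Multiset.mem_add.1 hj with hj | hj; exact h1 j hj; exact h2 j hj

/-- `m` is congruent to `X_0` times (the product over) `m'`. -/
def AbsTo (K : Type) [Field K] (e k : ℕ) (m m' : Multiset ℕ) : Prop :=
  Vld e k m' ∧ wt e m' + e = wt e m ∧ Cong (P K e k m) (Xv K e k 0 * P K e k m')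

lemma AbsTo.extend {m m' rest : Multiset ℕ} (h : AbsTo K e k m m') (hrest : Vld e k rest) :
    AbsTo K e k (m + rest) (m' + rest) := by
  obtain ⟨h1, h2, h3⟩ := h
  refine ⟨h1.add hrest, by simp; omega, ?_⟩
  have := h3.mul_right (P K e k rest)
  exact this.cast (by simp) (by simp [mul_assoc])

/-- A-moves inside the low block. -/
lemma moveL (h2k : 2 * k ≤ e) {a b : ℕ} (ha : a + 1 < k) (hb : b + 1 < k) :
    Cong (Xv K e k a * Xv K e k (b+1)) (Xv K e k b * Xv K e k (a+1)) := by
  have hae : a < e := by omega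
  have hbe : b < e := by omega
  have h := congA (K := K) (e := e) (k := k) (a := a) (b := b)
    ⟨hae, Or.inl ha⟩ ⟨hbe, Or.inl hb⟩
  rw [Xb_lt hae, Xb_lt hbe, Xb_lt (show a+1 < e by omega), Xb_lt (show b+1 < e by omega)] at h
  exact h

/-- Any two low pairs with equal sums are congruent. -/
lemma pairL (h2k : 2 * k ≤ e) : ∀ n {x y x' y' : ℕ}, x' = x + n → x < k → y < k → x' < k →
    y' < k → x + y = x' + y' → Cong (Xv K e k x * Xv K e k y) (Xv K e k x' * Xv K e k y') := by
  intro n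
  induction n with
  | zero => intro x y x' y' h1 _ _ _ _ h2
            have : x' = x := by omega
            subst this
            have : y' = y := by omega
            subst this; exact Cong.refl _
  | succ n ih =>
    intro x y x' y' h1 hx hy hx' hy' hsum
    have hy1 : 1 ≤ y := by omega
    have step := moveL (K := K) h2k (a := x) (b := y - 1)
      (by omega) (by omega)
    rw [show y - 1 + 1 = y by omega] at step
    have rec' := ih (x := x + 1) (y := y - 1) (x' := x') (y' := y')
      (by omega) (by omega) (by omega) hx' hy' (by omega)
    exact (step.trans (rec'.cast (by ring) rfl)).cast rfl rfl

/-- Symmetric version without order hypothesis. -/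
lemma pairL' (h2k : 2 * k ≤ e) {x y x' y' : ℕ} (hx : x < k) (hy : y < k) (hx' : x' < k)
    (hy' : y' < k) (hsum : x + y = x' + y') :
    Cong (Xv K e k x * Xv K e k y) (Xv K e k x' * Xv K e k y') := by
  rcases le_total x x' with h | h
  · exact pairL h2k (x' - x) (by omega) hx hy hx' hy' hsum
  · exact ((pairL h2k (x - x') (by omega) hx' hy' hx hy (by omega)).symm)

/-- A-moves in the high block, `Xb`-indices allowed up to `e`. -/
lemma pairH (h2k : 2 * k ≤ e) : ∀ n {x y x' y' : ℕ}, x' = x + n →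
    2 * k ≤ x → x ≤ e → 2 * k ≤ y → y ≤ e → 2 * k ≤ x' → x' ≤ e → 2 * k ≤ y' → y' ≤ e →
    x + y = x' + y' → Cong (Xb K e k x * Xb K e k y) (Xb K e k x' * Xb K e k y') := by
  intro n
  induction n with
  | zero => intro x y x' y' h1 _ _ _ _ _ _ _ _ h2
            have : x' = x := by omega
            subst this
            have : y' = y := by omega
            subst this; exact Cong.refl _
  | succ n ih =>
    intro x y x' y' h1 hx1 hx2 hy1 hy2 hx1' hx2' hy1' hy2' hsum
    have hyy : 2 * k + 1 ≤ y := by omega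
    have step := congA (K := K) (e := e) (k := k) (a := x) (b := y - 1)
      ⟨by omega, Or.inr hx1⟩ ⟨by omega, Or.inr (by omega)⟩
    rw [show y - 1 + 1 = y by omega] at step
    have rec' := ih (x := x + 1) (y := y - 1) (x' := x') (y' := y')
      (by omega) (by omega) (by omega) (by omega) (by omega) hx1' hx2' hy1' hy2' (by omega)
    exact (step.trans (rec'.cast (by ring) rfl)).cast rfl rfl

lemma pairH' (h2k : 2 * k ≤ e) {x y x' y' : ℕ}
    (hx1 : 2 * k ≤ x) (hx2 : x ≤ e) (hy1 : 2 * k ≤ y) (hy2 : y ≤ e)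
    (hx1' : 2 * k ≤ x') (hx2' : x' ≤ e) (hy1' : 2 * k ≤ y') (hy2' : y' ≤ e)
    (hsum : x + y = x' + y') :
    Cong (Xb K e k x * Xb K e k y) (Xb K e k x' * Xb K e k y') := by
  rcases le_total x x' with h | h
  · exact pairH h2k (x' - x) (by omega) hx1 hx2 hy1 hy2 hx1' hx2' hy1' hy2' hsum
  · exact (pairH h2k (x - x') (by omega) hx1' hx2' hy1' hy2' hx1 hx2 hy1 hy2 (by omega)).symm

end Sally

namespace Sally

variable {K : Type} [Field K] {e k : ℕ}

/-- Concentration: a low multiset is congruent to one with `min (k-1) sum` pulled out. -/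
lemma conc (hk : 0 < k) (h2k : 2 * k ≤ e) : ∀ n (m : Multiset ℕ), Multiset.card m = n →
    0 < n → (∀ i ∈ m, i < k) → ∃ m', (∀ i ∈ m', i < k) ∧ Multiset.card m' + 1 = n ∧
      m'.sum + min (k-1) m.sum = m.sum ∧
      Cong (P K e k m) (P K e k (min (k-1) m.sum ::ₘ m')) := by
  intro n
  induction n using Nat.strong_induction_on with
  | _ n ih =>
    intro m hcard hpos hlt
    obtain ⟨a, m₁, rfl⟩ : ∃ a m₁, m = a ::ₘ m₁ := by
      have : m ≠ 0 := by
        intro h; rw [h] at hcard; simp at hcard; omega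
      obtain ⟨a, ha⟩ := Multiset.exists_mem_of_ne_zero this
      obtain ⟨m₁, rfl⟩ := Multiset.exists_cons_of_mem ha
      exact ⟨a, m₁, rfl⟩
    rcases Nat.eq_zero_or_pos (Multiset.card m₁) with h1 | h1
    · -- singleton
      rw [Multiset.card_eq_zero] at h1
      subst h1
      have ha : a < k := hlt a (by simp)
      have : min (k-1) (a ::ₘ (0:Multiset ℕ)).sum = a := by
        simp only [Multiset.sum_cons, Multiset.sum_zero, add_zero]; omega
      refine ⟨0, by simp, by simpa using hcard, by rw [this]; simp, ?_⟩
      rw [this]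
      exact Cong.refl _
    · obtain ⟨b, m₂, rfl⟩ : ∃ b m₂, m₁ = b ::ₘ m₂ := by
        have : m₁ ≠ 0 := by intro h; rw [h] at h1; simp at h1
        obtain ⟨b, hb⟩ := Multiset.exists_mem_of_ne_zero this
        obtain ⟨m₂, rfl⟩ := Multiset.exists_cons_of_mem hb
        exact ⟨b, m₂, rfl⟩
      have ha : a < k := hlt a (by simp)
      have hb : b < k := hlt b (by simp)
      have hm₂ : ∀ i ∈ m₂, i < k := fun i hi => hlt i (by simp [hi])
      have hσ' : (a ::ₘ b ::ₘ m₂).sum = a + b + m₂.sum := by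
        simp only [Multiset.sum_cons]; ring
      rcases le_or_gt (k-1) (a+b) with hab | hab
      · -- combine a,b into (k-1, a+b-(k-1))
        have hd : a + b - (k-1) < k := by omega
        have hmin : min (k-1) ((a ::ₘ b ::ₘ m₂).sum) = k - 1 := by rw [hσ']; omega
        have hpair := pairL' (K := K) h2k ha hb (by omega) hd
          (show a + b = (k-1) + (a + b - (k-1)) by omega)
        refine ⟨(a + b - (k-1)) ::ₘ m₂, ?_, ?_, ?_, ?_⟩
        · intro i hi; rcases Multiset.mem_cons.1 hi with rfl | hi
          · exact hd
          · exact hm₂ i hi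
        · simp at hcard ⊢; omega
        · rw [hmin]; simp only [Multiset.sum_cons]; omega
        · rw [hmin]
          have := hpair.mul_right (P K e k m₂)
          exact this.cast (by simp [mul_assoc]) (by simp [mul_assoc])
      · -- a + b < k-1 : merge into one and recurse
        have hpair := pairL' (K := K) h2k ha hb (show a+b < k by omega) hk
          (show a + b = (a+b) + 0 by omega)
        have hcard₂ : Multiset.card ((a+b) ::ₘ m₂) = n - 1 := by
          simp at hcard ⊢; omega
        have hn2 : 2 ≤ n := by rw [← hcard]; simp
        obtain ⟨m'', hm''lt, hm''card, hm''sum, hm''cong⟩ :=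
          ih (n-1) (by omega) ((a+b) ::ₘ m₂) hcard₂ (by omega)
          (by intro i hi; rcases Multiset.mem_cons.1 hi with rfl | hi
              · omega
              · exact hm₂ i hi)
        have hsum2 : ((a+b) ::ₘ m₂).sum = (a ::ₘ b ::ₘ m₂).sum := by
          simp only [Multiset.sum_cons]; omega
        rw [hsum2] at hm''sum hm''cong
        refine ⟨0 ::ₘ m'', ?_, ?_, ?_, ?_⟩
        · intro i hi; rcases Multiset.mem_cons.1 hi with rfl | hi
          · omega
          · exact hm''lt i hi
        · simp at hcard hm''card ⊢; omega
        · simp only [Multiset.sum_cons] at hm''sum ⊢; omega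
        · -- P (a::b::m₂) ≡ Xv(a+b) * Xv 0 * P m₂ = Xv 0 * P ((a+b)::ₘm₂) ≡ Xv 0 * P (min::ₘm'')
          have step1 := hpair.mul_right (P K e k m₂)
          have step2 := hm''cong.mul_left (Xv K e k 0)
          refine ((step1.trans (step2.cast (by simp; ring) rfl))).cast
            (by simp [mul_assoc]) (by simp; ring)

/-- Connectivity in the low block: equal card and sum implies congruent. -/
lemma lconn (hk : 0 < k) (h2k : 2 * k ≤ e) : ∀ n (m₁ m₂ : Multiset ℕ),
    Multiset.card m₁ = n → Multiset.card m₂ = n → (∀ i ∈ m₁, i < k) → (∀ i ∈ m₂, i < k) →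
    m₁.sum = m₂.sum → Cong (P K e k m₁) (P K e k m₂) := by
  intro n
  induction n using Nat.strong_induction_on with
  | _ n ih =>
    intro m₁ m₂ hc1 hc2 hl1 hl2 hs
    rcases Nat.eq_zero_or_pos n with rfl | hpos
    · rw [Multiset.card_eq_zero] at hc1 hc2; subst hc1; subst hc2; exact Cong.refl _
    obtain ⟨m₁', hl1', hc1', hs1', hcong1⟩ := conc (K := K) hk h2k n m₁ hc1 hpos hl1
    obtain ⟨m₂', hl2', hc2', hs2', hcong2⟩ := conc (K := K) hk h2k n m₂ hc2 hpos hl2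
    rw [hs] at hcong1 hs1'
    have hrec := ih (n-1) (by omega) m₁' m₂' (by omega) (by omega) hl1' hl2' (by omega)
    have hmid : Cong (P K e k (min (k-1) m₂.sum ::ₘ m₁')) (P K e k (min (k-1) m₂.sum ::ₘ m₂')) :=
      (hrec.mul_left (Xv K e k (min (k-1) m₂.sum))).cast (by simp) (by simp)
    exact (hcong1.trans hmid).trans hcong2.symm

/-- A mixed (low,high) pair absorbs `X_0`. -/
lemma mixed (hk : 0 < k) (h2k : 2 * k ≤ e) : ∀ i j : ℕ, i < k → 2 * k ≤ j → j < e →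
    ∃ m', AbsTo K e k {i, j} m' := by
  intro i
  induction i with
  | zero =>
    intro j _ hj1 hj2
    refine ⟨{j}, by intro x hx; simp at hx; subst hx; exact ⟨hj2, Or.inr hj1⟩,
      by simp; omega, (Cong.refl _).cast rfl (by simp)⟩
  | succ i ih =>
    intro j hik hj1 hj2
    have step := (congA (K := K) (e := e) (k := k) (a := i) (b := j)
      ⟨by omega, Or.inl hik⟩ ⟨hj2, Or.inr hj1⟩).symm
    rw [Xb_lt (show i < e by omega), Xb_lt hj2, Xb_lt (show i + 1 < e by omega)] at step
    rcases lt_or_ge (j+1) e with hje | hje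
    · rw [Xb_lt hje] at step
      obtain ⟨m', hv, hw, hc⟩ := ih (j+1) (by omega) (by omega) hje
      refine ⟨m', hv, by simp at hw ⊢; omega, ?_⟩
      have : Cong (P K e k {i+1, j}) (P K e k {i, j+1}) :=
        step.cast (by simp; ring) (by simp)
      exact this.trans hc
    · have hje' : j + 1 = e := by omega
      rw [hje', Xb_ge le_rfl] at step
      have hbal : bal (e - e) = (0 ::ₘ {0} : Multiset ℕ) := by simp [bal]
      rw [hbal] at step
      refine ⟨{i, 0}, ?_, ?_, ?_⟩
      · intro x hx; simp at hx
        rcases hx with rfl | rfl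
        · exact ⟨by omega, Or.inl (by omega)⟩
        · exact ⟨by omega, Or.inl hk⟩
      · simp; omega
      · exact step.cast (by simp; ring) (by simp; ring)

/-- A high pair with sum different from `e + 2k - 1` absorbs `X_0`. -/
lemma hhAbs (hk : 0 < k) (h2k : 2 * k ≤ e) {x y : ℕ}
    (hx1 : 2 * k ≤ x) (hx2 : x < e) (hy1 : 2 * k ≤ y) (hy2 : y < e)
    (hne : x + y ≠ e + 2 * k - 1) : ∃ m', AbsTo K e k {x, y} m' := by
  rcases le_or_gt (e + 2*k) (x + y) with hs | hs
  · -- wrap: (x,y) ≡ (x+y-e, e)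
    have h := pairH' (K := K) h2k hx1 (by omega) hy1 (by omega)
      (show 2*k ≤ x + y - e by omega) (show x + y - e ≤ e by omega)
      (show 2*k ≤ e by omega) le_rfl (by omega)
    rw [Xb_lt hx2, Xb_lt hy2, Xb_lt (show x + y - e < e by omega), Xb_ge le_rfl] at h
    have hbal : bal (e - e) = (0 ::ₘ {0} : Multiset ℕ) := by simp [bal]
    rw [hbal] at h
    refine ⟨{x + y - e, 0}, ?_, by simp; omega, h.cast (by simp) (by simp; ring)⟩
    intro t ht; simp at ht
    rcases ht with rfl | rfl
    · exact ⟨by omega, Or.inr (by omega)⟩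
    · exact ⟨by omega, Or.inl hk⟩
  · have hs2 : x + y ≤ e + 2*k - 2 := by omega
    -- (x,y) ≡ (2k, x+y-2k) =: (2k, j')
    set j' := x + y - 2*k with hj'
    have hj'1 : 2*k ≤ j' := by omega
    have hj'2 : j' ≤ e - 2 := by omega
    have h := pairH' (K := K) h2k hx1 (by omega) hy1 (by omega)
      (show 2*k ≤ 2*k by omega) (by omega) (show 2*k ≤ j' by omega) (by omega)
      (show x + y = 2*k + j' by omega)
    rw [Xb_lt hx2, Xb_lt hy2, Xb_lt (show 2*k < e by omega), Xb_lt (show j' < e by omega)] at h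
    have hb := (congB0 (K := K) (e := e) (k := k) (c := j') hj'1 (by omega)).symm
    rw [Xb_lt (show j' < e by omega), Xb_lt (show 2*k < e by omega),
      Xb_lt (show k - 1 < e by omega)] at hb
    rcases lt_or_ge (j' + k + 1) e with hje | hje
    · rw [Xb_lt hje] at hb
      obtain ⟨m', hv, hw, hc⟩ := mixed (K := K) hk h2k (k-1) (j'+k+1) (by omega) (by omega) hje
      refine ⟨m', hv, ?_, ?_⟩
      · simp at hw ⊢; omega
      · have hb' : Cong (Xv K e k (2*k) * Xv K e k j')
            (Xv K e k (k-1) * Xv K e k (j'+k+1)) := hb.cast (mul_comm _ _) rfl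
        have c1 : Cong (P K e k {x, y}) (P K e k ({k-1, j'+k+1} : Multiset ℕ)) :=
          (h.trans hb').cast (by simp) (by simp)
        exact c1.trans hc
    · rw [Xb_ge hje] at hb
      set u := j' + k + 1 - e with hu
      have hu2 : u ≤ k - 1 := by omega
      -- triple (k-1) ::ₘ bal u, sum σ₃ = k-1+u ≤ 2(k-1): drain to contain 0
      set σ₃ := k - 1 + u with hσ₃
      have hbal_lt : ∀ i ∈ bal u, i < k := by
        intro i hi; have := bal_mem_le hi; omega
      set c₁ := min (k-1) σ₃ with hc₁
      set rest := (c₁ ::ₘ {σ₃ - c₁} : Multiset ℕ) with hrest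
      have hlc := lconn (K := K) hk h2k 3 ((k-1) ::ₘ bal u) (0 ::ₘ rest)
        (by simp [bal]) (by simp [hrest]) ?_ ?_ ?_
      · refine ⟨rest, ?_, ?_, ?_⟩
        · intro t ht; simp [hrest] at ht
          rcases ht with rfl | rfl
          · exact ⟨by omega, Or.inl (by omega)⟩
          · exact ⟨by omega, Or.inl (by omega)⟩
        · simp [hrest]; omega
        · have c1 : Cong (P K e k {x, y}) (P K e k ((k-1) ::ₘ bal u)) := by
            refine (h.trans (hb.cast (by ring) rfl)).cast (by simp) (by simp)
          exact (c1.trans hlc).cast rfl (by simp)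
      · intro t ht; rcases Multiset.mem_cons.1 ht with rfl | ht
        · omega
        · exact hbal_lt t ht
      · intro t ht; simp [hrest] at ht
        rcases ht with rfl | rfl | rfl
        · omega
        · omega
        · omega
      · have := bal_sum u
        simp [hrest, this]; omega

end Sally

namespace Sally

variable {K : Type} [Field K] {e k : ℕ}

lemma AbsTo.of_cong {m m₂ m' : Multiset ℕ} (h : Cong (P K e k m) (P K e k m₂))
    (hw : wt e m = wt e m₂) (h2 : AbsTo K e k m₂ m') : AbsTo K e k m m' :=
  ⟨h2.1, by have := h2.2.1; omega, h.trans h2.2.2⟩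

lemma wt_bal (u : ℕ) : wt e (bal u) = 2 * e + u := by
  simp [bal, wt]; omega

/-- existence of a bounded multiset with given card and sum -/
lemma exmul (hk : 0 < k) : ∀ t σ', σ' ≤ t * (k-1) → ∃ r : Multiset ℕ,
    Multiset.card r = t ∧ r.sum = σ' ∧ ∀ i ∈ r, i < k := by
  intro t
  induction t with
  | zero => intro σ' h; simp at h; exact ⟨0, by simp, by simp [h], by simp⟩
  | succ t ih =>
    intro σ' h
    have h' : σ' - min (k-1) σ' ≤ t * (k-1) := by
      have : (t+1) * (k-1) = t * (k-1) + (k-1) := by ring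
      omega
    obtain ⟨r, h1, h2, h3⟩ := ih (σ' - min (k-1) σ') h'
    refine ⟨min (k-1) σ' ::ₘ r, by simp [h1], by simp only [Multiset.sum_cons, h2]; omega, ?_⟩
    intro i hi; rcases Multiset.mem_cons.1 hi with rfl | hi
    · omega
    · exact h3 i hi

/-- The main absorption route through the `B` relations, for low multisets that
can be rearranged as `{k-1} ∪ bal s ∪ rest`. -/
lemma absorb_main (hk : 0 < k) (h2k : 2 * k ≤ e) (m rest : Multiset ℕ) (s : ℕ)
    (hm : ∀ i ∈ m, i < k)
    (hs1 : k ≤ s) (hs2 : s + 2 ≤ 2 * k)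
    (hs3 : s = k → 2 * k + 1 ≤ e) (hs4 : s = k → 1 ≤ Multiset.card rest)
    (hr1 : Multiset.card rest + 3 = Multiset.card m)
    (hr2 : rest.sum + ((k - 1) + s) = m.sum)
    (hr3 : ∀ i ∈ rest, i < k) :
    ∃ m', AbsTo K e k m m' := by
  have hke : k < e := by omega
  -- rearrange m as (k-1) ::ₘ (bal s + rest)
  have hlc := lconn (K := K) hk h2k (Multiset.card m) m ((k-1) ::ₘ (bal s + rest)) rfl
    (by simp [bal]; omega) hm
    (by intro i hi
        rcases Multiset.mem_cons.1 hi with rfl | hi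
        · omega
        · rcases Multiset.mem_add.1 hi with hi | hi
          · have := bal_mem_le hi; omega
          · exact hr3 i hi)
    (by simp [bal_sum]; omega)
  -- apply the B relation with column c
  have hc1 : 2 * k ≤ e + s - (k+1) := by
    rcases Nat.eq_or_lt_of_le hs1 with h | h
    · have := hs3 h.symm; omega
    · omega
  have hc2 : e + s - (k+1) ≤ e + k - 3 := by omega
  have hcb := congB0 (K := K) (e := e) (k := k) hc1 hc2
  have hce : e + s - (k+1) + k + 1 = e + s := by omega
  rw [hce, Xb_ge (show e ≤ e + s by omega), Xb_lt (show k - 1 < e by omega),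
    show e + s - e = s by omega] at hcb
  have hstep : Cong (P K e k ((k-1) ::ₘ (bal s + rest)))
      (Xb K e k (e + s - (k+1)) * Xb K e k (2*k) * P K e k rest) :=
    (hcb.mul_right (P K e k rest)).cast (by simp [mul_assoc]) rfl
  have hchain := hlc.trans hstep
  rcases Nat.eq_or_lt_of_le hs1 with hsk | hsk
  · -- s = k; then 2k < e and the column is e-1
    have he : 2 * k + 1 ≤ e := hs3 hsk.symm
    rw [show e + s - (k+1) = e - 1 by omega, Xb_lt (show e - 1 < e by omega),
      Xb_lt (show 2*k < e by omega)] at hchain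
    obtain ⟨t, rest', rfl⟩ : ∃ t rest', rest = t ::ₘ rest' := by
      have h1 : 1 ≤ Multiset.card rest := hs4 hsk.symm
      have : rest ≠ 0 := by intro h; rw [h] at h1; simp at h1
      obtain ⟨t, ht⟩ := Multiset.exists_mem_of_ne_zero this
      obtain ⟨rest', rfl⟩ := Multiset.exists_cons_of_mem ht
      exact ⟨t, rest', rfl⟩
    have ht : t < k := hr3 t (Multiset.mem_cons_self _ _)
    obtain ⟨m₀, hv₀, hw₀, hc₀⟩ := mixed (K := K) hk h2k t (e-1) ht (by omega) (by omega)
    refine ⟨m₀ + (2*k ::ₘ rest'), ?_, ?_, ?_⟩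
    · refine hv₀.add ?_
      intro i hi; rcases Multiset.mem_cons.1 hi with rfl | hi
      · exact ⟨by omega, Or.inr le_rfl⟩
      · have := hr3 i (by simp [hi]); exact ⟨by omega, Or.inl this⟩
    · -- weights
      have e1 : wt e (m₀ + (2*k ::ₘ rest')) = wt e m₀ + ((e + 2*k) + wt e rest') := by
        simp only [wt_add, wt_cons]; try omega
      have e2 : wt e ({t, e-1} : Multiset ℕ) = (e + t) + ((e + (e-1)) + 0) := by
        simp only [Multiset.insert_eq_cons, wt_cons, wt_single]; rfl
      have e3 : wt e m = e * Multiset.card m + m.sum := rfl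
      have e4 : wt e rest' = e * Multiset.card rest' + rest'.sum := rfl
      have e5 : Multiset.card m = Multiset.card rest' + 4 := by simp at hr1; omega
      have e6 : m.sum = (t + rest'.sum) + ((k-1) + s) := by simp at hr2; omega
      have e7 : e * Multiset.card m = e * Multiset.card rest' + 4 * e := by rw [e5]; ring
      omega
    · have hmul := hc₀.mul_right (P K e k (2*k ::ₘ rest'))
      refine hchain.trans (hmul.cast (by simp; ring) (by simp; ring))
  · -- k < s : the column is ≥ e, giving a balanced low pair
    have hcol : e ≤ e + s - (k+1) := by omega
    rw [Xb_ge hcol, show e + s - (k+1) - e = s - (k+1) by omega] at hchain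
    have hu : s - (k+1) ≤ k - 3 + (k - k) := by omega
    have hu' : s - (k+1) ≤ k - 2 := by omega
    rcases Nat.lt_or_ge (2*k) e with he | he
    · -- e > 2k : mixed pair (u/2, 2k)
      rw [Xb_lt (show 2*k < e by omega)] at hchain
      obtain ⟨m₀, hv₀, hw₀, hc₀⟩ := mixed (K := K) hk h2k ((s - (k+1))/2) (2*k)
        (by omega) le_rfl he
      refine ⟨m₀ + ((s - (k+1) - (s - (k+1))/2) ::ₘ rest), ?_, ?_, ?_⟩
      · refine hv₀.add ?_
        intro i hi; rcases Multiset.mem_cons.1 hi with rfl | hi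
        · exact ⟨by omega, Or.inl (by omega)⟩
        · have := hr3 i hi; exact ⟨by omega, Or.inl this⟩
      · have e1 : wt e (m₀ + ((s - (k+1) - (s - (k+1))/2) ::ₘ rest)) =
            wt e m₀ + ((e + (s - (k+1) - (s - (k+1))/2)) + wt e rest) := by
          simp only [wt_add, wt_cons]; try omega
        have e2 : wt e ({(s - (k+1))/2, 2*k} : Multiset ℕ)
            = (e + (s - (k+1))/2) + ((e + 2*k) + 0) := by
          simp only [Multiset.insert_eq_cons, wt_cons, wt_single]; rfl
        have e3 : wt e m = e * Multiset.card m + m.sum := rfl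
        have e4 : wt e rest = e * Multiset.card rest + rest.sum := rfl
        have e5 : Multiset.card m = Multiset.card rest + 3 := by omega
        have e7 : e * Multiset.card m = e * Multiset.card rest + 3 * e := by rw [e5]; ring
        omega
      · have hmul := hc₀.mul_right (Xv K e k (s - (k+1) - (s - (k+1))/2) * P K e k rest)
        refine hchain.trans (hmul.cast (by simp [bal]; ring) (by simp; ring))
    · -- e = 2k : X_{2k} is itself X_0^2
      have he2 : e = 2 * k := by omega
      rw [show (2*k) = e by omega, Xb_ge le_rfl, show e - e = 0 by omega] at hchain
      refine ⟨(s - (k+1))/2 ::ₘ (s - (k+1) - (s - (k+1))/2) ::ₘ 0 ::ₘ rest, ?_, ?_, ?_⟩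
      · intro i hi
        rcases Multiset.mem_cons.1 hi with rfl | hi
        · exact ⟨by omega, Or.inl (by omega)⟩
        rcases Multiset.mem_cons.1 hi with rfl | hi
        · exact ⟨by omega, Or.inl (by omega)⟩
        rcases Multiset.mem_cons.1 hi with rfl | hi
        · exact ⟨by omega, Or.inl hk⟩
        · have := hr3 i hi; exact ⟨by omega, Or.inl this⟩
      · have e3 : wt e m = e * Multiset.card m + m.sum := rfl
        have e4 : wt e rest = e * Multiset.card rest + rest.sum := rfl
        have e5 : Multiset.card m = Multiset.card rest + 3 := by omega
        have e7 : e * Multiset.card m = e * Multiset.card rest + 3 * e := by rw [e5]; ring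
        simp only [wt_cons]
        omega
      · refine hchain.cast rfl (by simp [bal]; ring)

/-- The key low-block lemma: a low multiset either absorbs `X_0` or is one of the
two exceptional families. -/
lemma lkey (hk : 0 < k) (h2k : 2 * k ≤ e) (hek : k + 4 ≤ e) (m : Multiset ℕ)
    (hm : ∀ i ∈ m, i < k) (hc : 2 ≤ Multiset.card m) :
    (∃ m', AbsTo K e k m m') ∨
    (Multiset.card m = 2 ∧ k ≤ m.sum ∧ m.sum + 2 ≤ 2 * k) ∨
    (Multiset.card m = 3 ∧ m.sum + 1 = 2 * k) := by
  set n := Multiset.card m with hn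
  set σ := m.sum with hσ
  have hσn : σ ≤ n * (k-1) := by
    have := Multiset.sum_le_card_nsmul m (k-1) (fun x hx => by have := hm x hx; omega)
    simpa [← hn, ← hσ, smul_eq_mul] using this
  rcases le_or_gt σ ((n-1) * (k-1)) with hdr | hdr
  · -- drain within the low block
    obtain ⟨rest, hr1, hr2, hr3⟩ := exmul (k := k) hk (n-1) σ hdr
    left
    have hwm : wt e m = e * n + σ := rfl
    have hwr : wt e rest = e * (n-1) + σ := by rw [wt, hr1, hr2]
    have hen : e * n = e * (n-1) + e := by
      have h1 : n - 1 + 1 = n := by omega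
      calc e * n = e * (n - 1 + 1) := by rw [h1]
        _ = e * (n-1) + e := by ring
    refine ⟨rest, fun i hi => ⟨by have := hr3 i hi; omega, Or.inl (hr3 i hi)⟩, by omega, ?_⟩
    have := lconn (K := K) hk h2k n m (0 ::ₘ rest) hn.symm (by simp [hr1]; omega) hm
      (fun i hi => by rcases Multiset.mem_cons.1 hi with rfl | hi; exact hk; exact hr3 i hi)
      (by simp [hr2, ← hσ])
    exact this.cast rfl (by simp)
  · have hk2 : 2 ≤ k := by
      rcases Nat.lt_or_ge k 2 with h | h
      · exfalso
        have hk1 : k - 1 = 0 := by omega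
        rw [hk1, Nat.mul_zero] at hσn hdr
        omega
      · exact h
    rcases Nat.eq_or_lt_of_le hc with hn2 | hn3
    · -- n = 2 : family B
      right; left
      rw [← hn2, show (2-1) * (k-1) = k - 1 by ring] at hdr
      rw [← hn2, show 2 * (k-1) = 2*k - 2 by omega] at hσn
      exact ⟨hn2.symm, by omega, by omega⟩
    have hn3' : 3 ≤ n := hn3
    have hA : (n-1) * (k-1) = (n-3) * (k-1) + 2 * (k-1) := by
      have h2 := Nat.add_mul (n-3) 2 (k-1)
      rw [show n - 3 + 2 = n - 1 by omega] at h2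
      exact h2
    have hA2 : n * (k-1) = (n-3) * (k-1) + 3 * (k-1) := by
      have h2 := Nat.add_mul (n-3) 3 (k-1)
      rw [show n - 3 + 3 = n by omega] at h2
      exact h2
    rcases Nat.lt_or_ge n 4 with hn4 | hn4
    · -- n = 3
      have hn3e : n = 3 := by omega
      have hA0 : (n-3) * (k-1) = 0 := by rw [hn3e]; simp
      rcases Nat.eq_or_lt_of_le (show (n-1)*(k-1) + 1 ≤ σ by omega) with hre | hre
      · -- σ = 2(k-1)+1 = 2k-1 : family D
        right; right
        exact ⟨hn3e, by omega⟩
      · -- σ ≥ 2k : absorb with s = σ - (k-1)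
        left
        obtain ⟨rest, hr1, hr2, hr3⟩ := exmul (k := k) hk (n-3) (σ - ((k-1) + (σ - (k-1))))
          (by omega)
        exact absorb_main hk h2k m rest (σ - (k-1)) hm (by omega) (by omega)
          (by omega) (by omega) (by omega) (by omega) hr3
    · -- n ≥ 4
      left
      rcases Nat.eq_or_lt_of_le (show (n-1)*(k-1) + 1 ≤ σ by omega) with hre | hre
      · -- r = 1
        rcases Nat.lt_or_ge (2*k) e with he | he
        · -- s = k
          obtain ⟨rest, hr1, hr2, hr3⟩ := exmul (k := k) hk (n-3) (σ - ((k-1) + k))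
            (by omega)
          exact absorb_main hk h2k m rest k hm le_rfl (by omega)
            (fun _ => by omega) (fun _ => by omega) (by omega) (by omega) hr3
        · -- e = 2k, k ≥ 4 : s = 2k-2
          have he2 : e = 2 * k := by omega
          have hk4 : 4 ≤ k := by omega
          have hA4 : 1 * (k-1) ≤ (n-3) * (k-1) := Nat.mul_le_mul_right _ (by omega)
          rw [one_mul] at hA4
          obtain ⟨rest, hr1, hr2, hr3⟩ := exmul (k := k) hk (n-3) (σ - ((k-1) + (2*k-2)))
            (by omega)
          exact absorb_main hk h2k m rest (2*k-2) hm (by omega) (by omega)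
            (by omega) (by omega) (by omega) (by omega) hr3
      · -- r ≥ 2 : s = σ - (k-1) - (n-3)(k-1)... use s = (k-1) + r
        obtain ⟨rest, hr1, hr2, hr3⟩ := exmul (k := k) hk (n-3)
          (σ - ((k-1) + (σ - (n-3)*(k-1) - (k-1)))) (by omega)
        exact absorb_main hk h2k m rest (σ - (n-3)*(k-1) - (k-1)) hm (by omega) (by omega)
          (by omega) (by omega) (by omega) (by omega) hr3

end Sally

namespace Sally

variable {K : Type} [Field K] {e k : ℕ}

lemma absPair {x y : ℕ} {rest m₀ : Multiset ℕ} (h : AbsTo K e k {x, y} m₀)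
    (hrest : Vld e k rest) : AbsTo K e k (x ::ₘ y ::ₘ rest) (m₀ + rest) := by
  have h2 := h.extend hrest
  refine AbsTo.of_cong ?_ ?_ h2
  · exact (Cong.refl _).cast rfl (by simp [mul_assoc])
  · simp only [Multiset.insert_eq_cons, wt_add, wt_cons, wt_single, wt_zero]; omega

/-- The KEY structure lemma: any valid multiset of size ≥ 2 absorbs `X_0`
or belongs to one of the three exceptional families. -/
lemma key (hk : 0 < k) (h2k : 2 * k ≤ e) (hek : k + 4 ≤ e) (m : Multiset ℕ)
    (hm : Vld e k m) (hc : 2 ≤ Multiset.card m) :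
    (∃ m', AbsTo K e k m m') ∨
    (Multiset.card m = 2 ∧ (∀ i ∈ m, i < k) ∧ k ≤ m.sum ∧ m.sum + 2 ≤ 2 * k) ∨
    (Multiset.card m = 2 ∧ (∀ i ∈ m, 2 * k ≤ i ∧ i < e) ∧ m.sum + 1 = e + 2 * k) ∨
    (Multiset.card m = 3 ∧ (∀ i ∈ m, i < k) ∧ m.sum + 1 = 2 * k) := by
  by_cases hLow : ∀ i ∈ m, i < k
  · rcases lkey (K := K) hk h2k hek m hLow hc with h | h | h
    · exact Or.inl h
    · exact Or.inr (Or.inl ⟨h.1, hLow, h.2.1, h.2.2⟩)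
    · exact Or.inr (Or.inr (Or.inr ⟨h.1, hLow, h.2⟩))
  by_cases hHigh : ∀ i ∈ m, 2 * k ≤ i
  · -- all high
    have hv : ∀ i ∈ m, 2 * k ≤ i ∧ i < e := fun i hi => ⟨hHigh i hi, (hm i hi).1⟩
    obtain ⟨x, hxm⟩ : ∃ x, x ∈ m := by
      apply Multiset.exists_mem_of_ne_zero
      intro h0; rw [h0] at hc; simp at hc
    obtain ⟨m₁, rfl⟩ := Multiset.exists_cons_of_mem hxm
    obtain ⟨y, hym⟩ : ∃ y, y ∈ m₁ := by
      apply Multiset.exists_mem_of_ne_zero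
      intro h0; rw [h0] at hc; simp at hc
    obtain ⟨rest, rfl⟩ := Multiset.exists_cons_of_mem hym
    have hx := hv x (by simp)
    have hy := hv y (by simp)
    have hrest : Vld e k rest := fun i hi => hm i (by simp [hi])
    by_cases h1 : x + y + 1 = e + 2 * k
    · rcases Multiset.empty_or_exists_mem rest with rfl | ⟨z, hzr⟩
      · -- family C
        right; right; left
        refine ⟨by simp, ?_, by simp; omega⟩
        intro i hi; exact hv i hi
      · obtain ⟨rest', rfl⟩ := Multiset.exists_cons_of_mem hzr
        have hz := hv z (by simp)
        have hrest' : Vld e k rest' := fun i hi => hm i (by simp [hi])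
        by_cases h2 : x + z + 1 = e + 2 * k
        · by_cases h3 : y + z + 1 = e + 2 * k
          · -- x = y = z, 2x + 1 = e + 2k
            have hxy : x = y := by omega
            have hxz : x = z := by omega
            have h2ke : 2 * k + 1 ≤ e := by omega
            have hp := pairH' (K := K) h2k hx.1 (by omega) hy.1 (by omega)
              (le_refl (2*k)) (by omega) (show 2*k ≤ e - 1 by omega) (by omega)
              (show x + y = 2*k + (e-1) by omega)
            rw [Xb_lt hx.2, Xb_lt hy.2, Xb_lt (show 2*k < e by omega),
              Xb_lt (show e - 1 < e by omega)] at hp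
            have c1 : Cong (P K e k (x ::ₘ y ::ₘ z ::ₘ rest'))
                ((Xv K e k (2*k) * Xv K e k (e-1)) * (Xv K e k z * P K e k rest')) :=
              (hp.mul_right _).cast (by simp [mul_assoc]) rfl
            by_cases hx0 : x = 2 * k
            · -- e = 2k+1 : bridge through B column e-1
              have he21 : e = 2 * k + 1 := by omega
              have hk3 : 3 ≤ k := by omega
              have hbb := (congB0 (K := K) (e := e) (k := k) (c := e - 1)
                (by omega) (by omega)).symm
              rw [show e - 1 + k + 1 = e + k by omega, Xb_ge (show e ≤ e + k by omega),
                show e + k - e = k by omega, Xb_lt (show e - 1 < e by omega),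
                Xb_lt (show 2*k < e by omega), Xb_lt (show k - 1 < e by omega)] at hbb
              obtain ⟨m₀, hv₀, hw₀, hc₀⟩ := mixed (K := K) hk h2k (k-1) z
                (by omega) hz.1 hz.2
              left
              refine ⟨m₀ + (bal k + rest'), ?_, ?_, ?_⟩
              · refine hv₀.add (Vld.add ?_ hrest')
                intro i hi; have := bal_mem_le hi
                exact ⟨by omega, Or.inl (by omega)⟩
              · have e1 : wt e (m₀ + (bal k + rest')) =
                    wt e m₀ + ((2*e + k) + wt e rest') := by
                  simp only [wt_add, wt_bal]
                have e2 : wt e ({k-1, z} : Multiset ℕ) = (e + (k-1)) + ((e + z) + 0) := by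
                  simp only [Multiset.insert_eq_cons, wt_cons, wt_single]; rfl
                simp only [wt_cons]
                omega
              · have c2 : Cong ((Xv K e k (2*k) * Xv K e k (e-1)) * (Xv K e k z * P K e k rest'))
                    ((Xv K e k (k-1) * P K e k (bal k)) * (Xv K e k z * P K e k rest')) :=
                  (hbb.mul_right _).cast (by ring) rfl
                have c3 : Cong ((Xv K e k (k-1) * P K e k (bal k)) * (Xv K e k z * P K e k rest'))
                    (Xv K e k 0 * P K e k (m₀ + (bal k + rest'))) :=
                  (hc₀.mul_right (P K e k (bal k) * P K e k rest')).cast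
                    (by simp; ring) (by simp; ring)
                exact (c1.trans c2).trans c3
            · -- z ≠ 2k : pair (z, e-1) is not exceptional
              obtain ⟨m₀, hv₀, hw₀, hc₀⟩ := hhAbs (K := K) hk h2k (x := z) (y := e-1)
                hz.1 hz.2 (by omega) (by omega) (by omega)
              left
              refine ⟨m₀ + (2*k ::ₘ rest'), ?_, ?_, ?_⟩
              · refine hv₀.add ?_
                intro i hi; rcases Multiset.mem_cons.1 hi with rfl | hi
                · exact ⟨by omega, Or.inr le_rfl⟩
                · exact hrest' i hi
              · have e1 : wt e (m₀ + (2*k ::ₘ rest')) =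
                    wt e m₀ + ((e + 2*k) + wt e rest') := by
                  simp only [wt_add, wt_cons]
                have e2 : wt e ({z, e-1} : Multiset ℕ) = (e + z) + ((e + (e-1)) + 0) := by
                  simp only [Multiset.insert_eq_cons, wt_cons, wt_single]; rfl
                simp only [wt_cons]
                omega
              · have c2 : Cong ((Xv K e k (2*k) * Xv K e k (e-1)) * (Xv K e k z * P K e k rest'))
                    (Xv K e k 0 * P K e k (m₀ + (2*k ::ₘ rest'))) :=
                  (hc₀.mul_right (Xv K e k (2*k) * P K e k rest')).cast
                    (by simp; ring) (by simp; ring)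
                exact c1.trans c2
          · -- pair (y,z) works
            obtain ⟨m₀, hv₀, hw₀, hc₀⟩ := hhAbs (K := K) hk h2k (x := y) (y := z)
              hy.1 hy.2 hz.1 hz.2 (by omega)
            have habs := absPair (K := K) ⟨hv₀, hw₀, hc₀⟩
              (show Vld e k (x ::ₘ rest') from fun i hi => hm i (by
                rcases Multiset.mem_cons.1 hi with rfl | hi <;> simp [hi]))
            have meq : (y ::ₘ z ::ₘ (x ::ₘ rest')) = x ::ₘ y ::ₘ z ::ₘ rest' := by
              rw [Multiset.cons_swap z x, Multiset.cons_swap y x]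
            exact Or.inl ⟨m₀ + (x ::ₘ rest'), meq ▸ habs⟩
        · -- pair (x,z) works
          obtain ⟨m₀, hv₀, hw₀, hc₀⟩ := hhAbs (K := K) hk h2k (x := x) (y := z)
            hx.1 hx.2 hz.1 hz.2 (by omega)
          have habs := absPair (K := K) ⟨hv₀, hw₀, hc₀⟩
            (show Vld e k (y ::ₘ rest') from fun i hi => hm i (by
              rcases Multiset.mem_cons.1 hi with rfl | hi <;> simp [hi]))
          have meq : (x ::ₘ z ::ₘ (y ::ₘ rest')) = x ::ₘ y ::ₘ z ::ₘ rest' := by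
            rw [Multiset.cons_swap z y]
          exact Or.inl ⟨m₀ + (y ::ₘ rest'), meq ▸ habs⟩
    · -- pair (x,y) works
      obtain ⟨m₀, hv₀, hw₀, hc₀⟩ := hhAbs (K := K) hk h2k (x := x) (y := y)
        hx.1 hx.2 hy.1 hy.2 (by omega)
      exact Or.inl ⟨m₀ + rest, absPair (K := K) ⟨hv₀, hw₀, hc₀⟩ hrest⟩
  · -- mixed : there is a low and a high variable
    push_neg at hLow hHigh
    obtain ⟨j, hjm, hjk⟩ := hLow
    obtain ⟨i, him, hik⟩ := hHigh
    have hj2k : 2 * k ≤ j := by rcases (hm j hjm).2 with h | h; omega; exact h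
    have hikk : i < k := by rcases (hm i him).2 with h | h; exact h; omega
    have hij : i ≠ j := by omega
    have hjm' : j ∈ m.erase i := (Multiset.mem_erase_of_ne (Ne.symm hij)).2 hjm
    obtain ⟨rest, hrest_eq⟩ := Multiset.exists_cons_of_mem hjm'
    have hme : m = i ::ₘ j ::ₘ rest := by
      rw [← Multiset.cons_erase him, hrest_eq]
    have hrest : Vld e k rest := by
      intro t ht
      apply hm
      rw [hme]; simp [ht]
    obtain ⟨m₀, hv₀, hw₀, hc₀⟩ := mixed (K := K) hk h2k i j hikk hj2k (hm j hjm).1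
    exact Or.inl ⟨m₀ + rest, hme ▸ absPair (K := K) ⟨hv₀, hw₀, hc₀⟩ hrest⟩

end Sally

namespace Sally

variable {K : Type} [Field K] {e k : ℕ}

/-- Family C pairs with equal sums are congruent. -/
lemma famC_conn (hk : 0 < k) (h2k : 2 * k ≤ e) {m₁ m₂ : Multiset ℕ}
    (hc₁ : Multiset.card m₁ = 2) (hv₁ : ∀ i ∈ m₁, 2 * k ≤ i ∧ i < e)
    (hc₂ : Multiset.card m₂ = 2) (hv₂ : ∀ i ∈ m₂, 2 * k ≤ i ∧ i < e)
    (hs : m₁.sum = m₂.sum) : Cong (P K e k m₁) (P K e k m₂) := by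
  obtain ⟨x, y, rfl⟩ := Multiset.card_eq_two.1 hc₁
  obtain ⟨x', y', rfl⟩ := Multiset.card_eq_two.1 hc₂
  have hx := hv₁ x (by simp); have hy := hv₁ y (by simp)
  have hx' := hv₂ x' (by simp); have hy' := hv₂ y' (by simp)
  simp at hs
  have := pairH' (K := K) h2k hx.1 (by omega) hy.1 (by omega) hx'.1 (by omega)
    hy'.1 (by omega) (by omega)
  rw [Xb_lt hx.2, Xb_lt hy.2, Xb_lt hx'.2, Xb_lt hy'.2] at this
  exact this.cast (by simp) (by simp)

/-- The bridge between families C and D. -/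
lemma famCD (hk : 0 < k) (h2k : 2 * k ≤ e) {x y : ℕ}
    (hx1 : 2 * k ≤ x) (hx2 : x < e) (hy1 : 2 * k ≤ y) (hy2 : y < e)
    (hsum : x + y + 1 = e + 2 * k) {t : Multiset ℕ} (ht : ∀ i ∈ t, i < k)
    (htc : Multiset.card t = 3) (hts : t.sum + 1 = 2 * k) :
    Cong (P K e k ({x, y} : Multiset ℕ)) (P K e k t) := by
  have hk2 : 2 ≤ k := by
    have := Multiset.sum_le_card_nsmul t (k-1) (fun i hi => by have := ht i hi; omega)
    rw [htc] at this; simp [smul_eq_mul] at this; omega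
  have h2ke : 2 * k < e := by omega
  have hp := pairH' (K := K) h2k hx1 (by omega) hy1 (by omega)
    (le_refl (2*k)) (by omega) (show 2*k ≤ e - 1 by omega) (by omega)
    (show x + y = 2*k + (e-1) by omega)
  rw [Xb_lt hx2, Xb_lt hy2, Xb_lt (show 2*k < e by omega),
    Xb_lt (show e - 1 < e by omega)] at hp
  have hbb := (congB0 (K := K) (e := e) (k := k) (c := e - 1)
    (by omega) (by omega)).symm
  rw [show e - 1 + k + 1 = e + k by omega, Xb_ge (show e ≤ e + k by omega),
    show e + k - e = k by omega, Xb_lt (show e - 1 < e by omega),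
    Xb_lt (show 2*k < e by omega), Xb_lt (show k - 1 < e by omega)] at hbb
  have hlc := lconn (K := K) hk h2k 3 ((k-1) ::ₘ bal k) t (by simp [bal])
    htc
    (by intro i hi
        rcases Multiset.mem_cons.1 hi with rfl | hi
        · omega
        · have := bal_mem_le hi; omega)
    ht (by simp only [Multiset.sum_cons, bal_sum]; omega)
  have c0 : Cong (P K e k ({x, y} : Multiset ℕ)) (Xv K e k (2*k) * Xv K e k (e-1)) :=
    hp.cast (by simp) rfl
  have c1 : Cong (Xv K e k (2*k) * Xv K e k (e-1)) (P K e k ((k-1) ::ₘ bal k)) :=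
    hbb.cast (mul_comm _ _) (by simp)
  exact (c0.trans c1).trans hlc

/-- No valid multiset has weight `e + s` for `s` in the gap. -/
lemma noRep1 {s : ℕ} (hk : 0 < k) (h2k : 2 * k ≤ e) (hs1 : k ≤ s) (hs2 : s + 1 ≤ 2 * k)
    {m : Multiset ℕ} (hv : Vld e k m) (hw : wt e m = e + s) : False := by
  rcases Multiset.empty_or_exists_mem m with rfl | ⟨x, hx⟩
  · simp at hw; omega
  obtain ⟨m', rfl⟩ := Multiset.exists_cons_of_mem hx
  rcases Multiset.empty_or_exists_mem m' with rfl | ⟨y, hy⟩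
  · rw [wt_cons, wt_zero] at hw
    have := (hv x (by simp)).2
    omega
  obtain ⟨m'', rfl⟩ := Multiset.exists_cons_of_mem hy
  simp only [wt_cons] at hw
  have h1 : e * Multiset.card m'' ≤ wt e m'' := Nat.le_add_right _ _
  omega

/-- No valid multiset has weight `2e + s` for `s = 2k - 1`. -/
lemma noRep2 {s : ℕ} (hk : 0 < k) (h2k : 2 * k ≤ e) (hs : s + 1 = 2 * k)
    {m : Multiset ℕ} (hv : Vld e k m) (hw : wt e m = 2 * e + s) : False := by
  rcases Multiset.empty_or_exists_mem m with rfl | ⟨x, hx⟩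
  · simp at hw; omega
  obtain ⟨m', rfl⟩ := Multiset.exists_cons_of_mem hx
  rcases Multiset.empty_or_exists_mem m' with rfl | ⟨y, hy⟩
  · rw [wt_cons, wt_zero] at hw
    have := (hv x (by simp)).1
    omega
  obtain ⟨m'', rfl⟩ := Multiset.exists_cons_of_mem hy
  rcases Multiset.empty_or_exists_mem m'' with rfl | ⟨z, hz⟩
  · -- pair with sum 2k-1 : impossible
    simp only [wt_cons, wt_zero] at hw
    have h1 := (hv x (by simp)).2
    have h2 := (hv y (by simp)).2
    omega
  obtain ⟨m''', rfl⟩ := Multiset.exists_cons_of_mem hz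
  simp only [wt_cons] at hw
  have h1 : e * Multiset.card m''' ≤ wt e m''' := Nat.le_add_right _ _
  omega

lemma wt_card2 {m : Multiset ℕ} (h : Multiset.card m = 2) : wt e m = 2 * e + m.sum := by
  rw [wt, h]; ring

lemma wt_card3 {m : Multiset ℕ} (h : Multiset.card m = 3) : wt e m = 3 * e + m.sum := by
  rw [wt, h]; ring

/-- The main congruence theorem: valid multisets of equal weight are congruent mod J. -/
theorem mainCong (hk : 0 < k) (h2k : 2 * k ≤ e) (hek : k + 4 ≤ e) :
    ∀ d (m₁ m₂ : Multiset ℕ), Vld e k m₁ → Vld e k m₂ → wt e m₁ = d → wt e m₂ = d →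
    Cong (P K e k m₁) (P K e k m₂) := by
  intro d
  induction d using Nat.strong_induction_on with
  | _ d ih =>
    intro m₁ m₂ hv₁ hv₂ hw₁ hw₂
    rcases Nat.lt_or_ge d (2*e) with hd | hd
    · -- small weights: cards ≤ 1, so m₁ = m₂
      have h1 : ∀ m : Multiset ℕ, Vld e k m → wt e m = d →
          (d = 0 ∧ m = 0) ∨ (∃ x, m = {x} ∧ e + x = d) := by
        intro m hv hw
        rcases Multiset.empty_or_exists_mem m with rfl | ⟨x, hx⟩
        · left; constructor
          · rw [← hw]; rfl
          · rfl
        obtain ⟨m', rfl⟩ := Multiset.exists_cons_of_mem hx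
        rcases Multiset.empty_or_exists_mem m' with rfl | ⟨y, hy⟩
        · right; exact ⟨x, rfl, by rw [← hw, wt_cons, wt_zero]; omega⟩
        obtain ⟨m'', rfl⟩ := Multiset.exists_cons_of_mem hy
        exfalso
        simp only [wt_cons] at hw
        have h1 : e * Multiset.card m'' ≤ wt e m'' := Nat.le_add_right _ _
        omega
      rcases h1 m₁ hv₁ hw₁ with ⟨hd0, rfl⟩ | ⟨x, rfl, hx⟩
      · rcases h1 m₂ hv₂ hw₂ with ⟨_, rfl⟩ | ⟨y, rfl, hy⟩
        · exact Cong.refl _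
        · exfalso; omega
      · rcases h1 m₂ hv₂ hw₂ with ⟨hd0, rfl⟩ | ⟨y, rfl, hy⟩
        · exfalso; omega
        · have : x = y := by omega
          subst this; exact Cong.refl _
    · -- d ≥ 2e : both have card ≥ 2
      have hcard : ∀ m : Multiset ℕ, Vld e k m → wt e m = d → 2 ≤ Multiset.card m := by
        intro m hv hw
        rcases Multiset.empty_or_exists_mem m with rfl | ⟨x, hx⟩
        · exfalso
          have : wt e (0 : Multiset ℕ) = 0 := rfl
          omega
        obtain ⟨m', rfl⟩ := Multiset.exists_cons_of_mem hx
        rcases Multiset.empty_or_exists_mem m' with rfl | ⟨y, hy⟩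
        · exfalso
          rw [wt_cons, wt_zero] at hw
          have := (hv x (by simp)).1
          omega
        obtain ⟨m'', rfl⟩ := Multiset.exists_cons_of_mem hy
        simp
      rcases key (K := K) hk h2k hek m₁ hv₁ (hcard _ hv₁ hw₁) with h₁ | h₁ | h₁ | h₁ <;>
        rcases key (K := K) hk h2k hek m₂ hv₂ (hcard _ hv₂ hw₂) with h₂ | h₂ | h₂ | h₂
      case inl.inl =>
        obtain ⟨m₁', hva, hwa, hca⟩ := h₁
        obtain ⟨m₂', hvb, hwb, hcb⟩ := h₂
        have hrec := ih (d - e) (by omega) m₁' m₂' hva hvb (by omega) (by omega)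
        exact (hca.trans (hrec.mul_left (Xv K e k 0))).trans hcb.symm
      case inl.inr.inl =>
        obtain ⟨m₁', hva, hwa, hca⟩ := h₁
        exact absurd (noRep1 hk h2k h₂.2.2.1 (by omega) hva
          (by have := wt_card2 (e := e) h₂.1; omega)) not_false
      case inl.inr.inr.inl =>
        obtain ⟨m₁', hva, hwa, hca⟩ := h₁
        exact absurd (noRep2 hk h2k (show (2*k-1) + 1 = 2*k by omega) hva
          (by have := wt_card2 (e := e) h₂.1; omega)) not_false
      case inl.inr.inr.inr =>
        obtain ⟨m₁', hva, hwa, hca⟩ := h₁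
        exact absurd (noRep2 hk h2k (show (2*k-1) + 1 = 2*k by omega) hva
          (by have := wt_card3 (e := e) h₂.1; omega)) not_false
      case inr.inl.inl =>
        obtain ⟨m₂', hvb, hwb, hcb⟩ := h₂
        exact absurd (noRep1 hk h2k h₁.2.2.1 (by omega) hvb
          (by have := wt_card2 (e := e) h₁.1; omega)) not_false
      case inr.inr.inl.inl =>
        obtain ⟨m₂', hvb, hwb, hcb⟩ := h₂
        exact absurd (noRep2 hk h2k (show (2*k-1) + 1 = 2*k by omega) hvb
          (by have := wt_card2 (e := e) h₁.1; omega)) not_false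
      case inr.inr.inr.inl =>
        obtain ⟨m₂', hvb, hwb, hcb⟩ := h₂
        exact absurd (noRep2 hk h2k (show (2*k-1) + 1 = 2*k by omega) hvb
          (by have := wt_card3 (e := e) h₁.1; omega)) not_false
      case inr.inl.inr.inl =>
        -- famB famB
        have e1 := wt_card2 (e := e) h₁.1
        have e2 := wt_card2 (e := e) h₂.1
        exact lconn (K := K) hk h2k 2 m₁ m₂ h₁.1 h₂.1 h₁.2.1 h₂.2.1 (by omega)
      case inr.inl.inr.inr.inl =>
        -- famB famC : impossible
        exfalso
        have e1 := wt_card2 (e := e) h₁.1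
        have e2 := wt_card2 (e := e) h₂.1
        omega
      case inr.inl.inr.inr.inr =>
        -- famB famD : impossible
        exfalso
        have e1 := wt_card2 (e := e) h₁.1
        have e2 := wt_card3 (e := e) h₂.1
        omega
      case inr.inr.inl.inr.inl =>
        exfalso
        have e1 := wt_card2 (e := e) h₁.1
        have e2 := wt_card2 (e := e) h₂.1
        omega
      case inr.inr.inr.inr.inl =>
        exfalso
        have e1 := wt_card3 (e := e) h₁.1
        have e2 := wt_card2 (e := e) h₂.1
        omega
      case inr.inr.inl.inr.inr.inl =>
        -- famC famC
        exact famC_conn hk h2k h₁.1 h₁.2.1 h₂.1 h₂.2.1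
          (by have e1 := wt_card2 (e := e) h₁.1; have e2 := wt_card2 (e := e) h₂.1; omega)
      case inr.inr.inl.inr.inr.inr =>
        -- famC famD
        obtain ⟨x, y, rfl⟩ := Multiset.card_eq_two.1 h₁.1
        have hx := h₁.2.1 x (by simp); have hy := h₁.2.1 y (by simp)
        have hs : x + y + 1 = e + 2 * k := by
          have := h₁.2.2; simp at this; omega
        exact famCD hk h2k hx.1 hx.2 hy.1 hy.2 hs h₂.2.1 h₂.1 h₂.2.2
      case inr.inr.inr.inr.inr.inl =>
        -- famD famC
        obtain ⟨x, y, rfl⟩ := Multiset.card_eq_two.1 h₂.1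
        have hx := h₂.2.1 x (by simp); have hy := h₂.2.1 y (by simp)
        have hs : x + y + 1 = e + 2 * k := by
          have := h₂.2.2; simp at this; omega
        exact (famCD hk h2k hx.1 hx.2 hy.1 hy.2 hs h₁.2.1 h₁.1 h₁.2.2).symm
      case inr.inr.inr.inr.inr.inr =>
        -- famD famD
        have e1 := wt_card3 (e := e) h₁.1
        have e2 := wt_card3 (e := e) h₂.1
        exact lconn (K := K) hk h2k 3 m₁ m₂ h₁.1 h₂.1 h₁.2.1 h₂.2.1 (by omega)

end Sally

namespace Sally

variable {K : Type} [Field K] {e k : ℕ}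

/-- The evaluation map. -/
noncomputable def phi (K : Type) [Field K] (e k : ℕ) :
    MvPolynomial (SallyVar e k) K →+* Polynomial K :=
  (aeval fun v : SallyVar e k => (Polynomial.X : Polynomial K) ^ (e + v.1)).toRingHom

lemma sallyIdeal_eq_ker : sallyIdeal K e k = RingHom.ker (phi K e k) := rfl

lemma phi_X (v : SallyVar e k) : phi K e k (X v) = Polynomial.X ^ (e + v.1) := by
  simp [phi]

lemma Xv_eq_X {i : ℕ} (h : i < e ∧ (i < k ∨ 2 * k ≤ i)) :
    Xv K e k i = X (⟨i, h⟩ : SallyVar e k) := by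
  rw [Xv, dif_pos h]
  rfl

lemma Xv_val (v : SallyVar e k) : Xv K e k v.1 = X v := by
  rw [Xv, dif_pos v.2]
  exact congrArg X (Subtype.coe_eta v v.2)

lemma phi_Xv {i : ℕ} (h : i < e ∧ (i < k ∨ 2 * k ≤ i)) :
    phi K e k (Xv K e k i) = Polynomial.X ^ (e + i) := by
  rw [Xv_eq_X h]
  exact phi_X _

lemma phi_Xb (hk : 0 < k) (h2k : 2 * k ≤ e) {i : ℕ}
    (h : (i < e ∧ (i < k ∨ 2 * k ≤ i)) ∨ (e ≤ i ∧ i + 2 ≤ e + 2 * k)) :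
    phi K e k (Xb K e k i) = Polynomial.X ^ (e + i) := by
  rcases h with ⟨h1, h2⟩ | ⟨h1, h2⟩
  · rw [Xb_lt h1, phi_Xv ⟨h1, h2⟩]
  · have h' : ¬ i < e := by omega
    rcases Nat.even_or_odd (i - e) with he | ho
    · have hm : (i - e) % 2 = 0 := Nat.even_iff.mp he
      have ht : (i - e) / 2 < e ∧ ((i - e) / 2 < k ∨ 2 * k ≤ (i - e) / 2) := by
        constructor
        · omega
        · left; omega
      rw [Xb, if_neg h', if_pos hm, map_pow, phi_Xv ht, ← pow_mul]
      congr 1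
      omega
    · have hm : (i - e) % 2 = 1 := Nat.odd_iff.mp ho
      have ht : (i - e) / 2 < e ∧ ((i - e) / 2 < k ∨ 2 * k ≤ (i - e) / 2) := by
        constructor
        · omega
        · left; omega
      have ht2 : (i - e) / 2 + 1 < e ∧ ((i - e) / 2 + 1 < k ∨ 2 * k ≤ (i - e) / 2 + 1) := by
        constructor
        · omega
        · left; omega
      rw [Xb, if_neg h', if_neg (by omega), map_mul, phi_Xv ht, phi_Xv ht2, ← pow_add]
      congr 1
      omega

/-- Every minor of `A` is in the kernel. -/
lemma minorsA_ker (hk : 0 < k) (h2k : 2 * k ≤ e) {p : MvPolynomial (SallyVar e k) K}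
    (hp : p ∈ minorsA K e k) : phi K e k p = 0 := by
  obtain ⟨c₁, hc₁, c₂, hc₂, rfl⟩ := hp
  obtain ⟨hc₁e, hc₁k⟩ := hc₁
  obtain ⟨hc₂e, hc₂k⟩ := hc₂
  have e₁ : phi K e k (Xb K e k c₁) = Polynomial.X ^ (e + c₁) :=
    phi_Xb hk h2k (Or.inl ⟨hc₁e, by omega⟩)
  have e₂ : phi K e k (Xb K e k c₂) = Polynomial.X ^ (e + c₂) :=
    phi_Xb hk h2k (Or.inl ⟨hc₂e, by omega⟩)
  have e₁' : phi K e k (Xb K e k (c₁+1)) = Polynomial.X ^ (e + (c₁+1)) := by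
    rcases Nat.lt_or_ge (c₁+1) e with h | h
    · exact phi_Xb hk h2k (Or.inl ⟨h, by omega⟩)
    · exact phi_Xb hk h2k (Or.inr ⟨h, by omega⟩)
  have e₂' : phi K e k (Xb K e k (c₂+1)) = Polynomial.X ^ (e + (c₂+1)) := by
    rcases Nat.lt_or_ge (c₂+1) e with h | h
    · exact phi_Xb hk h2k (Or.inl ⟨h, by omega⟩)
    · exact phi_Xb hk h2k (Or.inr ⟨h, by omega⟩)
  rw [map_sub, map_mul, map_mul, e₁, e₂, e₁', e₂', ← pow_add, ← pow_add]
  rw [show e + c₁ + (e + (c₂ + 1)) = e + c₂ + (e + (c₁ + 1)) by omega, sub_self]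

/-- Every column of `B` evaluates to `(X^a, X^(a+k+1))`. -/
lemma colsB_eval (hk : 0 < k) (h2k : 2 * k ≤ e)
    {q : MvPolynomial (SallyVar e k) K × MvPolynomial (SallyVar e k) K}
    (hq : q ∈ colsB K e k) :
    ∃ a, phi K e k q.1 = Polynomial.X ^ a ∧ phi K e k q.2 = Polynomial.X ^ (a + (k+1)) := by
  rcases hq with rfl | ⟨c, hc1, hc2, rfl⟩
  · refine ⟨e + (k-1), phi_Xb hk h2k (Or.inl ⟨by omega, Or.inl (by omega)⟩), ?_⟩
    have : phi K e k (Xb K e k (2*k)) = Polynomial.X ^ (e + 2*k) := by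
      rcases Nat.lt_or_ge (2*k) e with h | h
      · exact phi_Xb hk h2k (Or.inl ⟨h, Or.inr le_rfl⟩)
      · exact phi_Xb hk h2k (Or.inr ⟨h, by omega⟩)
    rw [this]
    congr 1
    omega
  · have he3 : 3 ≤ e + k := by omega
    refine ⟨e + c, ?_, ?_⟩
    · rcases Nat.lt_or_ge c e with h | h
      · exact phi_Xb hk h2k (Or.inl ⟨h, Or.inr hc1⟩)
      · exact phi_Xb hk h2k (Or.inr ⟨h, by omega⟩)
    · have : phi K e k (Xb K e k (c+k+1)) = Polynomial.X ^ (e + (c+k+1)) := by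
        rcases Nat.lt_or_ge (c+k+1) e with h | h
        · exact phi_Xb hk h2k (Or.inl ⟨h, Or.inr (by omega)⟩)
        · exact phi_Xb hk h2k (Or.inr ⟨h, by omega⟩)
      rw [this]
      congr 1
      omega

lemma minorsB_ker (hk : 0 < k) (h2k : 2 * k ≤ e) {p : MvPolynomial (SallyVar e k) K}
    (hp : p ∈ minorsB K e k) : phi K e k p = 0 := by
  obtain ⟨q₁, hq₁, q₂, hq₂, rfl⟩ := hp
  obtain ⟨a₁, ha₁, ha₁'⟩ := colsB_eval hk h2k hq₁
  obtain ⟨a₂, ha₂, ha₂'⟩ := colsB_eval hk h2k hq₂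
  rw [map_sub, map_mul, map_mul, ha₁, ha₂, ha₁', ha₂', ← pow_add, ← pow_add,
    show a₁ + (a₂ + (k+1)) = a₂ + (a₁ + (k+1)) by omega, sub_self]

lemma J_le_ker (hk : 0 < k) (h2k : 2 * k ≤ e) :
    J K e k ≤ RingHom.ker (phi K e k) := by
  apply sup_le <;> rw [Ideal.span_le] <;> intro p hp
  · exact minorsA_ker hk h2k hp
  · exact minorsB_ker hk h2k hp

/-- multiset of indices of a monomial exponent -/
def msOf (σ : SallyVar e k →₀ ℕ) : Multiset ℕ :=
  σ.toMultiset.map (fun v => v.1)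

lemma msOf_vld (σ : SallyVar e k →₀ ℕ) : Vld e k (msOf σ) := by
  intro i hi
  simp only [msOf, Multiset.mem_map] at hi
  obtain ⟨v, _, rfl⟩ := hi
  exact v.2

lemma monomial_eq_P (σ : SallyVar e k →₀ ℕ) :
    (monomial σ (1 : K)) = P K e k (msOf σ) := by
  induction σ using Finsupp.induction with
  | zero => simp [msOf, P]
  | single_add a b f ha hb ih =>
    have h1 : msOf (Finsupp.single a b + f) = Multiset.replicate b a.1 + msOf f := by
      simp [msOf, Finsupp.toMultiset_add, Finsupp.toMultiset_single, Multiset.nsmul_singleton,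
        Multiset.map_replicate]
    rw [h1, P_add, ← ih]
    have h2 : P K e k (Multiset.replicate b a.1) = X a ^ b := by
      rw [P, Multiset.map_replicate, Multiset.prod_replicate]
      congr 1
      exact Xv_val a
    rw [h2, X_pow_eq_monomial, monomial_mul, one_mul]


lemma phi_P {m : Multiset ℕ} (hm : Vld e k m) :
    phi K e k (P K e k m) = Polynomial.X ^ (wt e m) := by
  induction m using Multiset.induction with
  | empty => simp [wt]
  | cons i m ih =>
    have hi := hm i (by simp)
    have hm' : Vld e k m := fun j hj => hm j (by simp [hj])
    rw [P_cons, map_mul, phi_Xv hi, ih hm', wt_cons, ← pow_add]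

lemma phi_monomial (σ : SallyVar e k →₀ ℕ) (c : K) :
    phi K e k (monomial σ c) = Polynomial.C c * Polynomial.X ^ (wt e (msOf σ)) := by
  have h1 : (monomial σ c) = C c * monomial σ 1 := by
    rw [C_mul_monomial, mul_one]
  rw [h1, map_mul, monomial_eq_P, phi_P (msOf_vld σ)]
  congr 1
  simp [phi]

/-- The hard inclusion. -/
lemma ker_le_J (hk : 0 < k) (h2k : 2 * k ≤ e) (hek : k + 4 ≤ e) :
    RingHom.ker (phi K e k) ≤ J K e k := by
  suffices H : ∀ N (f : MvPolynomial (SallyVar e k) K), f.support.card ≤ N →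
      phi K e k f = 0 → f ∈ J K e k by
    intro f hf
    exact H f.support.card f le_rfl hf
  classical
  intro N
  induction N with
  | zero =>
    intro f hcard hker
    have : f = 0 := by
      rw [← support_eq_empty]
      exact Finset.card_eq_zero.1 (by omega)
    rw [this]; exact (J K e k).zero_mem
  | succ N ihN =>
    intro f hcard hker
    by_cases hf0 : f = 0
    · rw [hf0]; exact (J K e k).zero_mem
    have hne : f.support ≠ ∅ := by rwa [Ne, support_eq_empty]
    obtain ⟨σ₀, hσ₀⟩ := Finset.nonempty_of_ne_empty hne
    set W₀ := wt e (msOf σ₀) with hW₀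
    set T := f.support.filter (fun σ => wt e (msOf σ) = W₀) with hT
    set g := ∑ σ ∈ T, C (coeff σ f) * (monomial σ 1 - monomial σ₀ 1) with hg
    have hσ₀T : σ₀ ∈ T := by
      rw [hT, Finset.mem_filter]
      exact ⟨hσ₀, rfl⟩
    have hgJ : g ∈ J K e k := by
      apply Ideal.sum_mem
      intro σ hσ
      apply Ideal.mul_mem_left
      have hwσ : wt e (msOf σ) = W₀ := (Finset.mem_filter.1 hσ).2
      have := mainCong (K := K) hk h2k hek W₀ (msOf σ) (msOf σ₀)
        (msOf_vld σ) (msOf_vld σ₀) hwσ rfl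
      rw [Cong] at this
      rwa [monomial_eq_P, monomial_eq_P]
    -- the coefficient of X^W₀ in phi f is the sum of coefficients over T
    have hphi : phi K e k f = ∑ σ ∈ f.support, Polynomial.C (coeff σ f) *
        Polynomial.X ^ (wt e (msOf σ)) := by
      conv_lhs => rw [f.as_sum]
      rw [map_sum]
      exact Finset.sum_congr rfl (fun σ _ => phi_monomial σ _)
    have hcoeffW : (phi K e k f).coeff W₀ = ∑ σ ∈ T, coeff σ f := by
      rw [hphi, Polynomial.finset_sum_coeff, hT]
      rw [Finset.sum_filter]
      apply Finset.sum_congr rfl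
      intro σ _
      rw [Polynomial.coeff_C_mul, Polynomial.coeff_X_pow]
      by_cases h : wt e (msOf σ) = W₀
      · simp [h]
      · rw [if_neg (fun h' => h h'.symm), mul_zero, if_neg h]
    have hsum : ∑ σ ∈ T, coeff σ f = 0 := by
      rw [← hcoeffW, hker, Polynomial.coeff_zero]
    -- g is the part of f of weight W₀
    have hg2 : g = ∑ σ ∈ T, monomial σ (coeff σ f) := by
      rw [hg]
      have hcongr : ∀ σ ∈ T, C (coeff σ f) * (monomial σ (1:K) - monomial σ₀ 1)
          = monomial σ (coeff σ f) - C (coeff σ f) * monomial σ₀ 1 := by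
        intro σ _
        rw [mul_sub, C_mul_monomial, mul_one]
      rw [Finset.sum_congr rfl hcongr, Finset.sum_sub_distrib]
      have h0 : ∑ σ ∈ T, C (coeff σ f) * monomial σ₀ (1:K) = 0 := by
        rw [← Finset.sum_mul, ← map_sum, hsum, map_zero, zero_mul]
      rw [h0, sub_zero]
    have hcoeff' : ∀ τ, coeff τ (f - g) = if τ ∈ T then 0 else coeff τ f := by
      intro τ
      rw [coeff_sub, hg2]
      have h1 : coeff τ (∑ σ ∈ T, monomial σ (coeff σ f))
          = if τ ∈ T then coeff τ f else 0 := by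
        rw [MvPolynomial.coeff_sum]
        rw [Finset.sum_congr rfl (fun σ _ => coeff_monomial τ σ (coeff σ f))]
        exact Finset.sum_ite_eq' T τ (fun σ => coeff σ f)
      rw [h1]
      by_cases h : τ ∈ T <;> simp [h]
    have hsub : (f - g).support ⊆ f.support.erase σ₀ := by
      intro τ hτ
      rw [mem_support_iff] at hτ
      rw [hcoeff' τ] at hτ
      by_cases h : τ ∈ T
      · simp [h] at hτ
      · rw [if_neg h] at hτ
        refine Finset.mem_erase.2 ⟨?_, mem_support_iff.2 hτ⟩
        intro h'
        exact h (h' ▸ hσ₀T)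
    have hcard' : (f - g).support.card ≤ N := by
      have h1 := Finset.card_le_card hsub
      have h2 := Finset.card_erase_of_mem hσ₀
      omega
    have hker' : phi K e k (f - g) = 0 := by
      rw [map_sub, hker, zero_sub, neg_eq_zero]
      exact J_le_ker hk h2k hgJ
    have hfgJ := ihN (f - g) hcard' hker'
    have hfe : f = (f - g) + g := by ring
    rw [hfe]
    exact (J K e k).add_mem hfgJ hgJ

end Sally

/-- The defining ideal of the semigroup ring `K[S_k]` equals `I₂(A^e_k) + I₂(B^e_k)`. -/
theorem sallyIdeal_eq_minors (K : Type) [Field K] (e k : ℕ) (hk : 0 < k)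
    (h2k : 2 * k ≤ e) (hek : 4 ≤ e - k) :
    sallyIdeal K e k = Ideal.span (minorsA K e k) ⊔ Ideal.span (minorsB K e k) := by
  have hek' : k + 4 ≤ e := by omega
  show sallyIdeal K e k = Sally.J K e k
  rw [Sally.sallyIdeal_eq_ker]
  exact le_antisymm (Sally.ker_le_J hk h2k hek') (Sally.J_le_ker hk h2k)
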